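/- Let n_1 ≤ n_2 ≤ ... ≤ n_r be positive integers with k ≤ n_1. The maximum number of edges in a subgraph of K_{n_1,...,n_r} containing no k pairwise vertex-disjoint copies of K_r equals (∑_{1≤i<j≤r} n_i n_j) − n_1 n_2 + (k−1) n_2. -/

import Mathlib

/-- `H` (a family of finite edge sets) contains a matching of size `k`:
`k` pairwise disjoint edges. -/
def hasMatching {α : Type*} [DecidableEq α] (H : Finset (Finset α)) (k : ℕ) : Prop :=
  ∃ M ⊆ H, M.card = k ∧ (M : Set (Finset α)).Pairwise Disjoint

/-- The edge set of the complete `r`-partite `s`-uniform hypergraph with parts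
`V i = Fin (n i)`: all `s`-sets meeting each part in at most one vertex. -/
def crossEdges (r s : ℕ) (n : Fin r → ℕ) : Finset (Finset ((i : Fin r) × Fin (n i))) :=
  Finset.univ.filter fun S =>
    S.card = s ∧ ∀ i : Fin r, (S.filter fun v => v.1 = i).card ≤ 1

/-- `T` is a copy of `K_r^{(s)}` in the `s`-graph `H`: it is a transversal
(one vertex in each part) all of whose `s`-subsets are edges of `H`. -/
def isKrCopy (r s : ℕ) (n : Fin r → ℕ) (H : Finset (Finset ((i : Fin r) × Fin (n i))))
    (T : Finset ((i : Fin r) × Fin (n i))) : Prop :=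
  (∀ i : Fin r, (T.filter fun v => v.1 = i).card = 1) ∧ ∀ S ∈ T.powersetCard s, S ∈ H

/-- `H` contains `k` pairwise vertex-disjoint copies of `K_r^{(s)}`. -/
def hasKDisjointKr (r s k : ℕ) (n : Fin r → ℕ)
    (H : Finset (Finset ((i : Fin r) × Fin (n i)))) : Prop :=
  ∃ C : Finset (Finset ((i : Fin r) × Fin (n i))), C.card = k ∧
    (∀ T ∈ C, isKrCopy r s n H T) ∧
    (C : Set (Finset ((i : Fin r) × Fin (n i)))).Pairwise Disjoint

/-- The number of `s`-cliques of the graph with edge set `H`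
(an `s`-clique is an `s`-set all of whose `2`-subsets are edges). -/
def cliqueCount (r s : ℕ) (n : Fin r → ℕ)
    (H : Finset (Finset ((i : Fin r) × Fin (n i)))) : ℕ :=
  (Finset.univ.filter fun S : Finset ((i : Fin r) × Fin (n i)) =>
    S.card = s ∧ ∀ e ∈ S.powersetCard 2, e ∈ H).card

open Finset

section Aux
variable {r : ℕ} {n : Fin r → ℕ}

abbrev Vtx (r : ℕ) (n : Fin r → ℕ) := (i : Fin r) × Fin (n i)



lemma pair_mem_crossEdges {i j : Fin r} (hij : i ≠ j) (a : Fin (n i)) (b : Fin (n j)) :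
    ({⟨i, a⟩, ⟨j, b⟩} : Finset (Vtx r n)) ∈ crossEdges r 2 n := by
  have hne : (⟨i, a⟩ : Vtx r n) ≠ ⟨j, b⟩ := by
    intro h; exact hij (congrArg Sigma.fst h)
  simp only [crossEdges, mem_filter, mem_univ, true_and]
  constructor
  · rw [card_insert_of_notMem (by simp [hne]), card_singleton]
  · intro l
    apply card_le_one.2
    intro u hu v hv
    simp only [mem_filter, mem_insert, mem_singleton] at hu hv
    rcases hu with ⟨hu1 | hu1, hu2⟩ <;> rcases hv with ⟨hv1 | hv1, hv2⟩ <;>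
      subst hu1 <;> subst hv1 <;> first | rfl | (exact absurd (hu2.trans hv2.symm) hij) | (exact absurd (hv2.trans hu2.symm) hij)



lemma crossEdges_repr {e : Finset (Vtx r n)} (he : e ∈ crossEdges r 2 n) :
    ∃ (i j : Fin r) (a : Fin (n i)) (b : Fin (n j)), i < j ∧ e = {⟨i, a⟩, ⟨j, b⟩} := by
  simp only [crossEdges, mem_filter] at he
  obtain ⟨-, hcard, hparts⟩ := he
  obtain ⟨x, y, hxy, rfl⟩ := card_eq_two.1 hcard
  have hne : x.1 ≠ y.1 := by
    intro h
    apply hxy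
    have := hparts x.1
    rw [card_le_one] at this
    exact this x (mem_filter.2 ⟨by simp, rfl⟩) y (mem_filter.2 ⟨by simp, h.symm⟩)
  rcases lt_or_gt_of_ne hne with h | h
  · exact ⟨x.1, y.1, x.2, y.2, h, rfl⟩
  · exact ⟨y.1, x.1, y.2, x.2, h, by rw [pair_comm]⟩



lemma sig_inj {i : Fin r} {a b : Fin (n i)} (h : (⟨i, a⟩ : Vtx r n) = ⟨i, b⟩) : a = b := by
  simpa using h

lemma pair_eq_analysis {i j i' j' : Fin r} {a : Fin (n i)} {b : Fin (n j)}
    {a' : Fin (n i')} {b' : Fin (n j')} (hij : i < j) (hij' : i' < j')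
    (h : ({⟨i, a⟩, ⟨j, b⟩} : Finset (Vtx r n)) = {⟨i', a'⟩, ⟨j', b'⟩}) :
    i = i' ∧ j = j' ∧ HEq a a' ∧ HEq b b' := by
  have h1 : (⟨i, a⟩ : Vtx r n) ∈ ({⟨i', a'⟩, ⟨j', b'⟩} : Finset (Vtx r n)) := by
    rw [← h]; simp
  have h2 : (⟨j, b⟩ : Vtx r n) ∈ ({⟨i', a'⟩, ⟨j', b'⟩} : Finset (Vtx r n)) := by
    rw [← h]; simp
  simp only [mem_insert, mem_singleton] at h1 h2
  rcases h1 with h1 | h1 <;> rcases h2 with h2 | h2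
  · -- i = i', j = i' : impossible since then i = j
    exfalso
    have e1 := congrArg Sigma.fst h1
    have e2 := congrArg Sigma.fst h2
    exact absurd (e1.trans e2.symm) (ne_of_lt hij)
  · obtain ⟨e1, ha⟩ := Sigma.ext_iff.1 h1
    obtain ⟨e2, hb⟩ := Sigma.ext_iff.1 h2
    exact ⟨e1, e2, ha, hb⟩
  · -- i = j', j = i' : contradicts orders
    exfalso
    have e1 := congrArg Sigma.fst h1
    have e2 := congrArg Sigma.fst h2
    simp only at e1 e2
    subst e1; subst e2
    exact absurd hij' (not_lt_of_gt hij)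
  · exfalso
    have e1 := congrArg Sigma.fst h1
    have e2 := congrArg Sigma.fst h2
    exact absurd (e1.trans e2.symm) (ne_of_lt hij)

lemma crossEdges_card :
    (crossEdges r 2 n).card =
      ∑ p ∈ Finset.univ.filter (fun p : Fin r × Fin r => p.1 < p.2), n p.1 * n p.2 := by
  classical
  set S := Finset.univ.filter (fun p : Fin r × Fin r => p.1 < p.2) with hS
  have hb := Finset.card_bij
    (s := S.sigma (fun p => (Finset.univ : Finset (Fin (n p.1))) ×ˢ (Finset.univ : Finset (Fin (n p.2)))))
    (t := crossEdges r 2 n)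
    (fun x _ => ({⟨x.1.1, x.2.1⟩, ⟨x.1.2, x.2.2⟩} : Finset (Vtx r n)))
    (fun x hx => by
      simp only [hS, Finset.mem_sigma, mem_filter] at hx
      exact pair_mem_crossEdges (ne_of_lt hx.1.2) _ _)
    (fun x hx y hy h => by
      simp only [hS, Finset.mem_sigma, mem_filter] at hx hy
      obtain ⟨e1, e2, ha, hb⟩ := pair_eq_analysis hx.1.2 hy.1.2 h
      obtain ⟨⟨i, j⟩, ⟨a, b⟩⟩ := x
      obtain ⟨⟨i', j'⟩, ⟨a', b'⟩⟩ := y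
      simp only at e1 e2 ha hb
      subst e1; subst e2
      simp only [heq_eq_eq] at ha hb
      subst ha; subst hb; rfl)
    (fun e he => by
      obtain ⟨i, j, a, b, hij, rfl⟩ := crossEdges_repr he
      exact ⟨⟨⟨i, j⟩, ⟨a, b⟩⟩, by simp [hS, hij], rfl⟩)
  rw [← hb, Finset.card_sigma]
  exact Finset.sum_congr rfl (fun p _ => by simp)

lemma count_fix_two {i j : Fin r} (hij : i ≠ j) (a : Fin (n i)) (b : Fin (n j)) :
    (Finset.univ.filter fun f : ∀ l, Fin (n l) => f i = a ∧ f j = b).card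
      = ∏ l ∈ (Finset.univ.erase i).erase j, n l := by
  classical
  set s : ∀ l : Fin r, Finset (Fin (n l)) := fun l => Finset.univ.filter
    (fun x : Fin (n l) => (l = i → (⟨l, x⟩ : Vtx r n) = ⟨i, a⟩) ∧ (l = j → (⟨l, x⟩ : Vtx r n) = ⟨j, b⟩))
    with hs
  have hset : (Finset.univ.filter fun f : ∀ l, Fin (n l) => f i = a ∧ f j = b)
      = Fintype.piFinset s := by
    ext f
    simp only [mem_filter, mem_univ, true_and, Fintype.mem_piFinset, hs]
    constructor
    · rintro ⟨h1, h2⟩ l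
      exact ⟨fun hl => by subst hl; rw [h1], fun hl => by subst hl; rw [h2]⟩
    · intro h
      refine ⟨?_, ?_⟩
      · have := (h i).1 rfl
        simpa using this
      · have := (h j).2 rfl
        simpa using this
  rw [hset, Fintype.card_piFinset]
  have hsi : (s i).card = 1 := by
    have : s i = {a} := by
      ext x
      simp only [hs, mem_filter, mem_univ, true_and, mem_singleton]
      constructor
      · rintro ⟨h1, -⟩
        simpa using h1 trivial
      · rintro rfl
        exact ⟨fun _ => rfl, fun hij' => absurd hij' hij⟩
    rw [this, card_singleton]
  have hsj : (s j).card = 1 := by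
    have : s j = {b} := by
      ext x
      simp only [hs, mem_filter, mem_univ, true_and, mem_singleton]
      constructor
      · rintro ⟨-, h2⟩
        simpa using h2 trivial
      · rintro rfl
        exact ⟨fun hij' => absurd hij'.symm hij, fun _ => rfl⟩
    rw [this, card_singleton]
  have hj' : j ∈ Finset.univ.erase i := by simp [Ne.symm, hij.symm]
  rw [← Finset.mul_prod_erase Finset.univ _ (Finset.mem_univ i), hsi, one_mul,
    ← Finset.mul_prod_erase _ _ hj', hsj, one_mul]
  refine Finset.prod_congr rfl (fun l hl => ?_)
  simp only [Finset.mem_erase] at hl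
  have : s l = Finset.univ := by
    ext x
    simp only [hs, mem_filter, mem_univ, true_and, iff_true]
    exact ⟨fun h => absurd h hl.2.1, fun h => absurd h hl.1⟩
  rw [this, card_univ, Fintype.card_fin]

lemma count_fix_one {i : Fin r} (a : Fin (n i)) :
    (Finset.univ.filter fun f : ∀ l, Fin (n l) => f i = a).card
      = ∏ l ∈ Finset.univ.erase i, n l := by
  classical
  set s : ∀ l : Fin r, Finset (Fin (n l)) := fun l => Finset.univ.filter
    (fun x : Fin (n l) => (l = i → (⟨l, x⟩ : Vtx r n) = ⟨i, a⟩)) with hs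
  have hset : (Finset.univ.filter fun f : ∀ l, Fin (n l) => f i = a)
      = Fintype.piFinset s := by
    ext f
    simp only [mem_filter, mem_univ, true_and, Fintype.mem_piFinset, hs]
    constructor
    · rintro h1 l
      exact fun hl => by subst hl; rw [h1]
    · intro h
      have := h i rfl
      simpa using this
  rw [hset, Fintype.card_piFinset]
  have hsi : (s i).card = 1 := by
    have : s i = {a} := by
      ext x
      simp only [hs, mem_filter, mem_univ, true_and, mem_singleton]
      constructor
      · rintro h1
        simpa using h1 trivial
      · rintro rfl
        exact fun _ => rfl
    rw [this, card_singleton]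
  rw [← Finset.mul_prod_erase Finset.univ _ (Finset.mem_univ i), hsi, one_mul]
  refine Finset.prod_congr rfl (fun l hl => ?_)
  simp only [Finset.mem_erase] at hl
  have : s l = Finset.univ := by
    ext x
    simp only [hs, mem_filter, mem_univ, true_and, iff_true]
    exact fun h => absurd h hl.1
  rw [this, card_univ, Fintype.card_fin]


lemma mod_shift_recover {m x t : ℕ} (hx : x < m) (ht : t ≤ m) :
    ((x + (m - t)) % m + t) % m = x := by
  rw [Nat.mod_add_mod]
  have h : x + (m - t) + t = x + m := by omega
  rw [h, Nat.add_mod_right, Nat.mod_eq_of_lt hx]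

lemma mod_shift_ne {m g t t' : ℕ} (ht : t < m) (ht' : t' < m) (hne : t ≠ t') :
    (g + t) % m ≠ (g + t') % m := by
  intro h
  have h2 : t ≡ t' [MOD m] := Nat.ModEq.add_left_cancel' g h
  rw [Nat.ModEq, Nat.mod_eq_of_lt ht, Nat.mod_eq_of_lt ht'] at h2
  exact hne h2

lemma card_filter_le_val {m c : ℕ} (hc : c ≤ m) :
    (Finset.univ.filter fun a : Fin m => c ≤ a.val).card = m - c := by
  have himg : (Finset.univ.filter fun a : Fin m => c ≤ a.val)
      = Finset.image (fun x : Fin (m - c) => (⟨c + x.val, by omega⟩ : Fin m)) Finset.univ := by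
    ext a
    simp only [Finset.mem_filter, Finset.mem_univ, true_and, Finset.mem_image]
    constructor
    · intro ha
      exact ⟨⟨a.val - c, by omega⟩, by apply Fin.ext; simp; omega⟩
    · rintro ⟨x, rfl⟩
      simp
  rw [himg, Finset.card_image_of_injective _ (fun x y hxy => by
    apply Fin.ext
    have := congrArg Fin.val hxy
    simpa using this), Finset.card_univ, Fintype.card_fin]

lemma card_filter_val_lt {m c : ℕ} :
    (Finset.univ.filter fun a : Fin m => a.val < c).card ≤ c := by
  calc (Finset.univ.filter fun a : Fin m => a.val < c).card
      = ((Finset.univ.filter fun a : Fin m => a.val < c).image Fin.val).card := by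
        rw [Finset.card_image_of_injective _ Fin.val_injective]
    _ ≤ (Finset.range c).card := by
        apply Finset.card_le_card
        intro x hx
        simp only [Finset.mem_image, Finset.mem_filter] at hx
        obtain ⟨a, ⟨-, ha⟩, rfl⟩ := hx
        exact Finset.mem_range.2 ha
    _ = c := Finset.card_range c
lemma construction {r k : ℕ} {n : Fin r → ℕ} (hpos : ∀ i, 0 < n i) (hk : 1 ≤ k)
    (i0 i1 : Fin r) (h0 : i0.val = 0) (h1 : i1.val = 1) (hkn : k ≤ n i0) :
    ∃ H ⊆ crossEdges r 2 n, ¬ hasKDisjointKr r 2 k n H ∧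
      H.card = (∑ p ∈ Finset.univ.filter (fun p : Fin r × Fin r => p.1 < p.2), n p.1 * n p.2)
        - n i0 * n i1 + (k - 1) * n i1 := by
  classical
  have h01 : i0 ≠ i1 := by intro h; rw [h] at h0; omega
  have h01lt : i0 < i1 := by rw [Fin.lt_def, h0, h1]; omega
  set P : Finset (Vtx r n) → Prop :=
    fun e => ∃ a : Fin (n i0), ∃ b : Fin (n i1), k - 1 ≤ a.val ∧ e = {⟨i0, a⟩, ⟨i1, b⟩} with hP
  refine ⟨(crossEdges r 2 n).filter (fun e => ¬ P e), Finset.filter_subset _ _, ?_, ?_⟩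
  · rintro ⟨C, hCk, hcopy, hdisj⟩
    have hsel : ∀ T ∈ C, ∃ a : Fin (n i0), (⟨i0, a⟩ : Vtx r n) ∈ T ∧ a.val < k - 1 := by
      intro T hT
      obtain ⟨hparts, hedges⟩ := hcopy T hT
      obtain ⟨v, hv⟩ := Finset.card_eq_one.1 (hparts i0)
      have hvmem : v ∈ T.filter (fun v => v.1 = i0) := hv ▸ Finset.mem_singleton_self v
      rw [Finset.mem_filter] at hvmem
      obtain ⟨w, hw⟩ := Finset.card_eq_one.1 (hparts i1)
      have hwmem : w ∈ T.filter (fun v => v.1 = i1) := hw ▸ Finset.mem_singleton_self w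
      rw [Finset.mem_filter] at hwmem
      obtain ⟨vi, va⟩ := v
      obtain ⟨wi, wb⟩ := w
      obtain ⟨hvT, (rfl : vi = i0)⟩ := hvmem
      obtain ⟨hwT, (rfl : wi = i1)⟩ := hwmem
      have hpairmem : ({⟨vi, va⟩, ⟨wi, wb⟩} : Finset (Vtx r n)) ∈ T.powersetCard 2 := by
        refine Finset.mem_powersetCard.2 ⟨?_, ?_⟩
        · intro x hx
          rcases Finset.mem_insert.1 hx with rfl | hx
          · exact hvT
          · rw [Finset.mem_singleton] at hx; subst hx; exact hwT
        · rw [Finset.card_insert_of_notMem (by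
            simp only [Finset.mem_singleton]
            intro hcon
            exact h01 ((congrArg Sigma.fst hcon)))]
          rfl
      have hmem := hedges _ hpairmem
      rw [Finset.mem_filter] at hmem
      have hnP := hmem.2
      refine ⟨va, hvT, ?_⟩
      by_contra hcon
      exact hnP ⟨va, wb, by omega, rfl⟩
    let sel : Finset (Vtx r n) → Fin (n i0) := fun T =>
      if h : ∃ a : Fin (n i0), (⟨i0, a⟩ : Vtx r n) ∈ T ∧ a.val < k - 1 then h.choose
      else ⟨0, hpos i0⟩
    have hselspec : ∀ T ∈ C, (⟨i0, sel T⟩ : Vtx r n) ∈ T ∧ (sel T).val < k - 1 := by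
      intro T hT
      have h := hsel T hT
      simp only [sel, dif_pos h]
      exact h.choose_spec
    have hmaps : ∀ T ∈ C, sel T ∈ Finset.univ.filter (fun a : Fin (n i0) => a.val < k - 1) := by
      intro T hT
      simp only [Finset.mem_filter, Finset.mem_univ, true_and]
      exact (hselspec T hT).2
    have hinj : Set.InjOn sel C := by
      intro T hT T' hT' heq
      by_contra hne
      have hd := hdisj hT hT' hne
      have h1m := (hselspec T hT).1
      have h2m := (hselspec T' hT').1
      rw [← heq] at h2m
      exact Finset.disjoint_left.1 hd h1m h2m
    have hcard := Finset.card_le_card_of_injOn sel hmaps hinj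
    rw [hCk] at hcard
    have := card_filter_val_lt (m := n i0) (c := k - 1)
    omega
  · have hsplit := Finset.card_filter_add_card_filter_not
      (s := crossEdges r 2 n) (p := P)
    have hbadcard : ((crossEdges r 2 n).filter P).card = (n i0 - (k - 1)) * n i1 := by
      have hb := Finset.card_bij
        (s := ((Finset.univ.filter fun a : Fin (n i0) => k - 1 ≤ a.val) ×ˢ
          (Finset.univ : Finset (Fin (n i1)))))
        (t := (crossEdges r 2 n).filter P)
        (fun x _ => ({⟨i0, x.1⟩, ⟨i1, x.2⟩} : Finset (Vtx r n)))
        (fun x hx => by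
          simp only [Finset.mem_product, Finset.mem_filter, Finset.mem_univ, true_and] at hx
          refine Finset.mem_filter.2 ⟨pair_mem_crossEdges h01 _ _, ⟨x.1, x.2, hx.1, rfl⟩⟩)
        (fun x hx y hy h => by
          obtain ⟨-, -, ha, hb'⟩ := pair_eq_analysis h01lt h01lt h
          rw [heq_eq_eq] at ha hb'
          exact Prod.ext ha hb')
        (fun e he => by
          rw [Finset.mem_filter] at he
          obtain ⟨-, a, b, hab, rfl⟩ := he
          exact ⟨(a, b), by simp only [Finset.mem_product, Finset.mem_filter, Finset.mem_univ, true_and]; exact ⟨hab, trivial⟩, rfl⟩)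
      rw [← hb, Finset.card_product, card_filter_le_val (by omega), Finset.card_univ,
        Fintype.card_fin]
    have hA0σ : n i0 * n i1 ≤
        ∑ p ∈ Finset.univ.filter (fun p : Fin r × Fin r => p.1 < p.2), n p.1 * n p.2 := by
      exact Finset.single_le_sum (f := fun p : Fin r × Fin r => n p.1 * n p.2)
        (fun _ _ => Nat.zero_le _)
        (Finset.mem_filter.2 ⟨Finset.mem_univ (i0, i1), h01lt⟩)
    have hWA : (k - 1) * n i1 + (n i0 - (k - 1)) * n i1 = n i0 * n i1 := by
      rw [← Nat.add_mul]
      congr 1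
      omega
    rw [crossEdges_card] at hsplit
    omega
lemma prod_erase2_le {r : ℕ} {n : Fin r → ℕ} (hmono : Monotone n) (hpos : ∀ i, 0 < n i)
    (i0 i1 : Fin r) (h0 : i0.val = 0) (h1 : i1.val = 1) {i j : Fin r} (hij : i < j) :
    ∏ l ∈ (Finset.univ.erase i).erase j, n l ≤ ∏ l ∈ (Finset.univ.erase i0).erase i1, n l := by
  have h01 : i1 ≠ i0 := by intro h; rw [h] at h1; omega
  have hji : j ≠ i := (ne_of_lt hij).symm
  have hQ1 : n i * (n j * ∏ l ∈ (Finset.univ.erase i).erase j, n l) = ∏ l, n l := by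
    rw [Finset.mul_prod_erase _ _ (Finset.mem_erase.2 ⟨hji, Finset.mem_univ j⟩),
      Finset.mul_prod_erase _ _ (Finset.mem_univ i)]
  have hQ2 : n i0 * (n i1 * ∏ l ∈ (Finset.univ.erase i0).erase i1, n l) = ∏ l, n l := by
    rw [Finset.mul_prod_erase _ _ (Finset.mem_erase.2 ⟨h01, Finset.mem_univ i1⟩),
      Finset.mul_prod_erase _ _ (Finset.mem_univ i0)]
  have hle : n i0 * n i1 ≤ n i * n j := by
    have l1 : n i0 ≤ n i := hmono (by rw [Fin.le_def, h0]; omega)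
    have l2 : n i1 ≤ n j := hmono (by
      rw [Fin.le_def, h1]
      have := Fin.lt_def.1 hij
      omega)
    exact Nat.mul_le_mul l1 l2
  have hpos0 : 0 < n i0 * n i1 := Nat.mul_pos (hpos i0) (hpos i1)
  refine Nat.le_of_mul_le_mul_left ?_ hpos0
  calc (n i0 * n i1) * ∏ l ∈ (Finset.univ.erase i).erase j, n l
      ≤ (n i * n j) * ∏ l ∈ (Finset.univ.erase i).erase j, n l :=
        Nat.mul_le_mul_right _ hle
    _ = ∏ l, n l := by rw [← hQ1]; ring
    _ = (n i0 * n i1) * ∏ l ∈ (Finset.univ.erase i0).erase i1, n l := by rw [← hQ2]; ring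
lemma main_ub {r k : ℕ} {n : Fin r → ℕ} (hmono : Monotone n) (hpos : ∀ i, 0 < n i)
    (hk : 1 ≤ k) (i0 i1 : Fin r) (h0 : i0.val = 0) (h1 : i1.val = 1) (hkn : k ≤ n i0)
    {H : Finset (Finset (Vtx r n))} (hH : H ⊆ crossEdges r 2 n)
    (hbig : (∑ p ∈ Finset.univ.filter (fun p : Fin r × Fin r => p.1 < p.2), n p.1 * n p.2)
        - n i0 * n i1 + (k - 1) * n i1 < H.card) :
    hasKDisjointKr r 2 k n H := by
  classical
  have h01 : i0 ≠ i1 := by intro h; rw [h] at h0; omega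
  have h01' : i1 ≠ i0 := Ne.symm h01
  have h01lt : i0 < i1 := by rw [Fin.lt_def, h0, h1]; omega
  have hi0le : ∀ l, i0 ≤ l := fun l => by rw [Fin.le_def, h0]; omega
  have hni0le : ∀ l, n i0 ≤ n l := fun l => hmono (hi0le l)
  have hD := Finset.card_sdiff_add_card_eq_card hH
  rw [crossEdges_card] at hD
  set σ := ∑ p ∈ Finset.univ.filter (fun p : Fin r × Fin r => p.1 < p.2), n p.1 * n p.2 with hσ
  set D := crossEdges r 2 n \ H with hDdef
  set P2 := ∏ l ∈ (Finset.univ.erase i0).erase i1, n l with hP2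
  set P1 := ∏ l ∈ Finset.univ.erase i0, n l with hP1def
  have hP1 : P1 = n i1 * P2 := by
    rw [hP1def, hP2, Finset.mul_prod_erase _ _ (Finset.mem_erase.2 ⟨h01', Finset.mem_univ i1⟩)]
  have hQ : ∏ l, n l = n i0 * P1 := by
    rw [hP1def, Finset.mul_prod_erase _ _ (Finset.mem_univ i0)]
  set good := fun f : ∀ l, Fin (n l) => ∀ i j : Fin r, i ≠ j →
    ({⟨i, f i⟩, ⟨j, f j⟩} : Finset (Vtx r n)) ∈ H with hgood
  set F := Finset.univ.filter good with hF
  have hsubset : Finset.univ.filter (fun f => ¬ good f) ⊆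
      D.biUnion (fun e => Finset.univ.filter (fun f : ∀ l, Fin (n l) => ∀ v ∈ e, f v.1 = v.2)) := by
    intro f hf
    rw [Finset.mem_filter] at hf
    have hng : ¬ good f := hf.2
    rw [hgood] at hng
    obtain ⟨i, hi⟩ := not_forall.1 hng
    obtain ⟨j, hj⟩ := not_forall.1 hi
    obtain ⟨hij, hnotin⟩ := Classical.not_imp.1 hj
    refine Finset.mem_biUnion.2 ⟨{⟨i, f i⟩, ⟨j, f j⟩}, ?_, ?_⟩
    · rw [hDdef, Finset.mem_sdiff]
      exact ⟨pair_mem_crossEdges hij _ _, hnotin⟩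
    · rw [Finset.mem_filter]
      refine ⟨Finset.mem_univ _, ?_⟩
      intro v hv
      rcases Finset.mem_insert.1 hv with rfl | hv
      · rfl
      · rw [Finset.mem_singleton] at hv; subst hv; rfl
  have hterm : ∀ e ∈ D,
      (Finset.univ.filter (fun f : ∀ l, Fin (n l) => ∀ v ∈ e, f v.1 = v.2)).card ≤ P2 := by
    intro e he
    have heC : e ∈ crossEdges r 2 n := (Finset.mem_sdiff.1 he).1
    obtain ⟨i, j, a, b, hij, rfl⟩ := crossEdges_repr heC
    have hset : (Finset.univ.filter (fun f : ∀ l, Fin (n l) =>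
        ∀ v ∈ ({⟨i, a⟩, ⟨j, b⟩} : Finset (Vtx r n)), f v.1 = v.2))
        = Finset.univ.filter (fun f => f i = a ∧ f j = b) := by
      ext f
      simp only [Finset.mem_filter, Finset.mem_univ, true_and]
      constructor
      · intro h
        exact ⟨h _ (Finset.mem_insert_self _ _), h _ (Finset.mem_insert.2 (Or.inr (Finset.mem_singleton_self _)))⟩
      · rintro ⟨hfa, hfb⟩ v hv
        rcases Finset.mem_insert.1 hv with rfl | hv
        · exact hfa
        · rw [Finset.mem_singleton] at hv; subst hv; exact hfb
    rw [hset, count_fix_two (ne_of_lt hij)]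
    rw [hP2]
    exact prod_erase2_le hmono hpos i0 i1 h0 h1 hij
  have hbadle : (Finset.univ.filter (fun f => ¬ good f)).card ≤ D.card * P2 := by
    refine le_trans (Finset.card_le_card hsubset) (le_trans Finset.card_biUnion_le ?_)
    calc ∑ e ∈ D, (Finset.univ.filter (fun f : ∀ l, Fin (n l) => ∀ v ∈ e, f v.1 = v.2)).card
        ≤ ∑ _e ∈ D, P2 := Finset.sum_le_sum hterm
      _ = D.card * P2 := by rw [Finset.sum_const, smul_eq_mul]
  have hsplitF := Finset.card_filter_add_card_filter_not (s := Finset.univ) (p := good)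
  have hQcard : (Finset.univ : Finset (∀ l, Fin (n l))).card = ∏ l, n l := by
    rw [Finset.card_univ]
    simp
  have hA0σ : n i0 * n i1 ≤ σ := by
    rw [hσ]
    exact Finset.single_le_sum (f := fun p : Fin r × Fin r => n p.1 * n p.2)
      (fun _ _ => Nat.zero_le _)
      (Finset.mem_filter.2 ⟨Finset.mem_univ (i0, i1), h01lt⟩)
  set W := (n i0 - (k - 1)) * n i1 with hWdef
  have hW : (k - 1) * n i1 + W = n i0 * n i1 := by
    rw [hWdef, ← Nat.add_mul]
    congr 1
    omega
  have hDlt : D.card < W := by omega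
  have hP2pos : 0 < P2 := by
    rw [hP2]; exact Finset.prod_pos (fun l _ => hpos l)
  have hmul : D.card * P2 + P2 ≤ W * P2 := by
    have h' := Nat.mul_le_mul_right P2 (show D.card + 1 ≤ W by omega)
    rw [Nat.add_mul, one_mul] at h'
    exact h'
  have hQsplit : ∏ l, n l = (k - 1) * n i1 * P2 + W * P2 := by
    calc ∏ l, n l = n i0 * (n i1 * P2) := by rw [hQ, hP1]
      _ = (n i0 * n i1) * P2 := by ring
      _ = ((k - 1) * n i1 + W) * P2 := by rw [hW]
      _ = (k - 1) * n i1 * P2 + W * P2 := by ring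
  have hFbig : (k - 1) * P1 < F.card := by
    have h1 : F.card + (Finset.univ.filter (fun f => ¬ good f)).card = ∏ l, n l := by
      rw [hF, ← hQcard]
      exact hsplitF
    have hA1P : (k - 1) * P1 = (k - 1) * n i1 * P2 := by rw [hP1]; ring
    omega
  set z0 : Fin (n i0) := ⟨0, hpos i0⟩ with hz0
  set t := Finset.univ.filter (fun g : ∀ l, Fin (n l) => g i0 = z0) with ht
  have htcard : t.card = P1 := by
    rw [ht, count_fix_one z0, hP1def]
  set kap : (∀ l, Fin (n l)) → (∀ l, Fin (n l)) :=
    fun f l => ⟨((f l).val + (n l - (f i0).val)) % n l, Nat.mod_lt _ (hpos l)⟩ with hkap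
  have hmapsto : ∀ f ∈ F, kap f ∈ t := by
    intro f _
    rw [ht, Finset.mem_filter]
    refine ⟨Finset.mem_univ _, ?_⟩
    apply Fin.ext
    show ((f i0).val + (n i0 - (f i0).val)) % n i0 = (0 : ℕ)
    rw [show (f i0).val + (n i0 - (f i0).val) = n i0 from by
      have := (f i0).isLt; omega, Nat.mod_self]
  have hpig := Finset.exists_lt_card_fiber_of_mul_lt_card_of_maps_to hmapsto
    (show t.card * (k - 1) < F.card by rw [htcard, mul_comm]; exact hFbig)
  obtain ⟨g, -, hfib⟩ := hpig
  obtain ⟨Wk, hWsub, hWcard⟩ := Finset.exists_subset_card_eq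
    (show k ≤ (F.filter fun f => kap f = g).card by omega)
  have hrecov : ∀ f : ∀ l, Fin (n l), ∀ l, ((kap f l).val + (f i0).val) % n l = (f l).val :=
    fun f l => mod_shift_recover (f l).isLt (le_trans (le_of_lt (f i0).isLt) (hni0le l))
  have hWmem : ∀ f ∈ Wk, f ∈ F ∧ kap f = g := by
    intro f hf
    have := hWsub hf
    rw [Finset.mem_filter] at this
    exact this
  have hkey : ∀ f ∈ Wk, ∀ f' ∈ Wk, f ≠ f' → ∀ l, f l ≠ f' l := by
    intro f hf f' hf' hne l
    have hgf : kap f = g := (hWmem f hf).2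
    have hgf' : kap f' = g := (hWmem f' hf').2
    have hne0 : (f i0).val ≠ (f' i0).val := by
      intro h00
      apply hne
      funext l'
      apply Fin.ext
      rw [← hrecov f l', ← hrecov f' l', hgf, hgf', h00]
    intro hll
    have e1 := hrecov f l
    have e2 := hrecov f' l
    rw [hgf] at e1
    rw [hgf'] at e2
    have heq2 : ((g l).val + (f i0).val) % n l = ((g l).val + (f' i0).val) % n l := by
      rw [e1, e2, hll]
    exact mod_shift_ne (lt_of_lt_of_le (f i0).isLt (hni0le l))
      (lt_of_lt_of_le (f' i0).isLt (hni0le l)) hne0 heq2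
  have hgoodW : ∀ f ∈ Wk, good f := by
    intro f hf
    have := (hWmem f hf).1
    rw [hF, Finset.mem_filter] at this
    exact this.2
  set Tf : (∀ l, Fin (n l)) → Finset (Vtx r n) :=
    fun f => Finset.univ.image (fun l => (⟨l, f l⟩ : Vtx r n)) with hTf
  have hTfinj : ∀ f ∈ Wk, ∀ f' ∈ Wk, Tf f = Tf f' → f = f' := by
    intro f hf f' hf' hTT
    by_contra hne
    have hdiff := hkey f hf f' hf' hne i0
    have hmem : (⟨i0, f i0⟩ : Vtx r n) ∈ Tf f := Finset.mem_image.2 ⟨i0, Finset.mem_univ _, rfl⟩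
    rw [hTT] at hmem
    obtain ⟨l, -, hl⟩ := Finset.mem_image.1 hmem
    have hfst : l = i0 := congrArg Sigma.fst hl
    subst hfst
    exact hdiff (sig_inj hl).symm
  refine ⟨Wk.image Tf, ?_, ?_, ?_⟩
  · rw [Finset.card_image_of_injOn (fun f hf f' hf' => hTfinj f hf f' hf'), hWcard]
  · intro T hT
    obtain ⟨f, hf, rfl⟩ := Finset.mem_image.1 hT
    constructor
    · intro i
      have hfilt : (Tf f).filter (fun v => v.1 = i) = {(⟨i, f i⟩ : Vtx r n)} := by
        ext v
        simp only [Finset.mem_filter, Finset.mem_singleton]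
        constructor
        · rintro ⟨hv, hv1⟩
          obtain ⟨l, -, rfl⟩ := Finset.mem_image.1 hv
          have : l = i := hv1
          subst this
          rfl
        · rintro rfl
          exact ⟨Finset.mem_image.2 ⟨i, Finset.mem_univ _, rfl⟩, rfl⟩
      rw [hfilt, Finset.card_singleton]
    · intro S hS
      obtain ⟨hSsub, hScard⟩ := Finset.mem_powersetCard.1 hS
      obtain ⟨x, y, hxy, rfl⟩ := Finset.card_eq_two.1 hScard
      have hx := hSsub (Finset.mem_insert_self _ _)
      have hy := hSsub (Finset.mem_insert.2 (Or.inr (Finset.mem_singleton_self _)))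
      obtain ⟨lx, -, rfl⟩ := Finset.mem_image.1 hx
      obtain ⟨ly, -, rfl⟩ := Finset.mem_image.1 hy
      have hll : lx ≠ ly := fun h => hxy (by subst h; rfl)
      exact hgoodW f hf lx ly hll
  · intro T hT T' hT' hne
    obtain ⟨f, hf, rfl⟩ := Finset.mem_image.1 (Finset.mem_coe.1 hT)
    obtain ⟨f', hf', rfl⟩ := Finset.mem_image.1 (Finset.mem_coe.1 hT')
    have hfne : f ≠ f' := fun h => hne (by rw [h])
    rw [Finset.disjoint_left]
    intro v hv hv'
    obtain ⟨l, -, rfl⟩ := Finset.mem_image.1 hv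
    obtain ⟨l', -, hl'⟩ := Finset.mem_image.1 hv'
    have hfst : l' = l := congrArg Sigma.fst hl'
    subst hfst
    exact hkey f hf f' hf' hfne l' (sig_inj hl').symm
end Aux
theorem stmt1 (r k : ℕ) (hr : 2 ≤ r) (n : Fin r → ℕ) (hmono : Monotone n)
    (hpos : ∀ i, 0 < n i) (hk : 1 ≤ k) (hkn : k ≤ n ⟨0, by omega⟩) :
    IsGreatest {m : ℕ | ∃ H ⊆ crossEdges r 2 n, ¬ hasKDisjointKr r 2 k n H ∧ H.card = m}
      ((∑ p ∈ Finset.univ.filter (fun p : Fin r × Fin r => p.1 < p.2), n p.1 * n p.2)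
        - n ⟨0, by omega⟩ * n ⟨1, by omega⟩ + (k - 1) * n ⟨1, by omega⟩) := by
  constructor
  · exact construction hpos hk ⟨0, by omega⟩ ⟨1, by omega⟩ rfl rfl hkn
  · rintro m ⟨H, hH, hnot, rfl⟩
    by_contra hgt
    push_neg at hgt
    exact hnot (main_ub hmono hpos hk ⟨0, by omega⟩ ⟨1, by omega⟩ rfl rfl hkn hH hgt)
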